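/- Let a_1, a_2 ∈ K with a_1 ≠ 0 and let M = [[0,1],[a_1,a_2]] ∈ K^{2×2}. If the polynomial a_1 x² + a_2 x − 1 has two distinct roots γ_1, γ_2 in K^×, then {E(γ_1), E(γ_2)} is a set of two linearly independent rank-one matrices each trace-orthogonal to both I and M, where E(γ) = [[γ, 1], [−γ², −γ]]. -/

import Mathlib

open Matrix

lemma auxrank {K : Type*} [Field K] (γ : K) :
    (!![γ, 1; -γ ^ 2, -γ] : Matrix (Fin 2) (Fin 2) K).rank = 1 := by
  rw [Matrix.rank_eq_finrank_span_row]
  have h : Set.range (!![γ, 1; -γ ^ 2, -γ] : Matrix (Fin 2) (Fin 2) K).row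
      = {![γ, 1], ![-γ ^ 2, -γ]} := by
    ext v
    constructor
    · rintro ⟨i, rfl⟩
      fin_cases i
      · left; ext j; fin_cases j <;> simp [Matrix.row]
      · right; ext j; fin_cases j <;> simp [Matrix.row]
    · rintro (rfl | rfl)
      · exact ⟨0, by ext j; fin_cases j <;> simp [Matrix.row]⟩
      · exact ⟨1, by ext j; fin_cases j <;> simp [Matrix.row]⟩
  rw [h]
  have h2 : (![-γ ^ 2, -γ] : Fin 2 → K) ∈ Submodule.span K ({![γ, 1]} : Set (Fin 2 → K)) := by
    rw [Submodule.mem_span_singleton]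
    exact ⟨-γ, by ext i; fin_cases i <;> simp <;> ring⟩
  have h3 : Submodule.span K ({![γ, 1], ![-γ ^ 2, -γ]} : Set (Fin 2 → K))
      = Submodule.span K {![γ, 1]} := by
    rw [Set.pair_comm, Submodule.span_insert_eq_span h2]
  rw [h3, finrank_span_singleton]
  intro hc
  have := congrFun hc 1
  simp at this

theorem stmt13 {K : Type*} [Field K] (a1 a2 γ1 γ2 : K) (ha : a1 ≠ 0)
    (hroot1 : a1 * γ1 ^ 2 + a2 * γ1 - 1 = 0) (hroot2 : a1 * γ2 ^ 2 + a2 * γ2 - 1 = 0)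
    (hne : γ1 ≠ γ2) (hγ1 : γ1 ≠ 0) (hγ2 : γ2 ≠ 0) :
    LinearIndependent K
      ![(!![γ1, 1; -γ1 ^ 2, -γ1] : Matrix (Fin 2) (Fin 2) K),
        (!![γ2, 1; -γ2 ^ 2, -γ2] : Matrix (Fin 2) (Fin 2) K)] ∧
    (!![γ1, 1; -γ1 ^ 2, -γ1] : Matrix (Fin 2) (Fin 2) K).rank = 1 ∧
    (!![γ2, 1; -γ2 ^ 2, -γ2] : Matrix (Fin 2) (Fin 2) K).rank = 1 ∧
    Matrix.trace (!![γ1, 1; -γ1 ^ 2, -γ1] * ((1 : Matrix (Fin 2) (Fin 2) K))ᵀ) = 0 ∧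
    Matrix.trace (!![γ1, 1; -γ1 ^ 2, -γ1] * (!![0, 1; a1, a2] : Matrix (Fin 2) (Fin 2) K)ᵀ) = 0 ∧
    Matrix.trace (!![γ2, 1; -γ2 ^ 2, -γ2] * ((1 : Matrix (Fin 2) (Fin 2) K))ᵀ) = 0 ∧
    Matrix.trace (!![γ2, 1; -γ2 ^ 2, -γ2] * (!![0, 1; a1, a2] : Matrix (Fin 2) (Fin 2) K)ᵀ) = 0 := by
  refine ⟨?_, auxrank γ1, auxrank γ2, ?_, ?_, ?_, ?_⟩
  · rw [linearIndependent_fin2]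
    constructor
    · intro hc
      have := congrFun (congrFun hc 0) 1
      simp at this
    · intro a hc
      have h01 := congrFun (congrFun hc 0) 1
      have h00 := congrFun (congrFun hc 0) 0
      simp [Matrix.smul_apply] at h01 h00
      subst h01
      simp at h00
      exact hne h00.symm
  · simp [Matrix.trace_fin_two, Matrix.mul_apply, Fin.sum_univ_two]
  · have ht : (!![0, 1; a1, a2] : Matrix (Fin 2) (Fin 2) K)ᵀ = !![0, a1; 1, a2] := by
      ext i j; fin_cases i <;> fin_cases j <;> simp
    rw [ht]
    simp [Matrix.trace_fin_two, Matrix.mul_apply, Fin.sum_univ_two]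
    linear_combination -hroot1
  · simp [Matrix.trace_fin_two, Matrix.mul_apply, Fin.sum_univ_two]
  · have ht : (!![0, 1; a1, a2] : Matrix (Fin 2) (Fin 2) K)ᵀ = !![0, a1; 1, a2] := by
      ext i j; fin_cases i <;> fin_cases j <;> simp
    rw [ht]
    simp [Matrix.trace_fin_two, Matrix.mul_apply, Fin.sum_univ_two]
    linear_combination -hroot2
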